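/- Let Z = {u ∈ ℝ × ℂ^{p−1} × ℂ : Σ_{k<p}(1+k⁴)|u_k|² + (1+p⁴)|u_p|² = ε²} with the constraint Σ_{k<p}(1+k⁴)|u_k|² ≤ ρε², where 0 < ρ < 1. Then the map u ↦ (u_p/|u_p|, u₀, …, u_{p−1}) is a homeomorphism from Z onto S¹ × B^{2p−1}, carrying the subset where Σ_{k<p}(1+k⁴)|u_k|² = ρε² onto S¹ × ∂B^{2p−1}. -/

import Mathlib

/-- The weighted squared norm `Σ_{k<p} (1+k⁴)|u_k|²` of the low-frequency part
`(u₀, u₁, …, u_{p-1}) ∈ ℝ × ℂ^{p-1}` (where index `j : Fin (p-1)` stands for `k = j+1`). -/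
noncomputable def lowNorm (p : ℕ) (v : ℝ × (Fin (p - 1) → ℂ)) : ℝ :=
  v.1 ^ 2 + ∑ j : Fin (p - 1), (1 + ((j : ℕ) + 1 : ℝ) ^ 4) * ‖v.2 j‖ ^ 2

/-- The set `Z`: the sphere `Σ_{k≤p}(1+k⁴)|u_k|² = ε²` with the constraint
`Σ_{k<p}(1+k⁴)|u_k|² ≤ ρε²`. -/
abbrev Zset (p : ℕ) (ε ρ : ℝ) : Type :=
  {u : (ℝ × (Fin (p - 1) → ℂ)) × ℂ //
    lowNorm p u.1 + (1 + (p : ℝ) ^ 4) * ‖u.2‖ ^ 2 = ε ^ 2 ∧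
      lowNorm p u.1 ≤ ρ * ε ^ 2}

/-- The ellipsoidal ball `B^{2p-1} = {(u₀,…,u_{p-1}) : Σ_{k<p}(1+k⁴)|u_k|² ≤ ρε²}`. -/
abbrev BallSet (p : ℕ) (ε ρ : ℝ) : Type :=
  {v : ℝ × (Fin (p - 1) → ℂ) // lowNorm p v ≤ ρ * ε ^ 2}

noncomputable def s13rad (p : ℕ) (ε : ℝ) (v : ℝ × (Fin (p - 1) → ℂ)) : ℝ :=
  Real.sqrt ((ε ^ 2 - lowNorm p v) / (1 + (p : ℝ) ^ 4))

lemma s13_cont_lowNorm (p : ℕ) : Continuous (lowNorm p) := by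
  unfold lowNorm
  refine (continuous_fst.pow 2).add (continuous_finset_sum _ fun j _ => ?_)
  exact continuous_const.mul ((continuous_norm.comp
    ((continuous_apply j).comp continuous_snd)).pow 2)

lemma s13_cont_rad (p : ℕ) (ε : ℝ) : Continuous (s13rad p ε) := by
  unfold s13rad
  exact Real.continuous_sqrt.comp ((continuous_const.sub (s13_cont_lowNorm p)).div_const _)

/-- `Z` is homeomorphic to `S¹ × B^{2p-1}` via `u ↦ (u_p/|u_p|, (u₀, …, u_{p-1}))`,
carrying the subset where `Σ_{k<p}(1+k⁴)|u_k|² = ρε²` onto `S¹ × ∂B^{2p-1}`. -/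
theorem stmt_13 (p : ℕ) (hp : 1 ≤ p) (ε ρ : ℝ) (hε : 0 < ε) (hρ₀ : 0 < ρ) (hρ₁ : ρ < 1) :
    ∃ f : Zset p ε ρ ≃ₜ Circle × BallSet p ε ρ,
      (∀ u : Zset p ε ρ,
          ((f u).1 : ℂ) = u.val.2 / (‖u.val.2‖ : ℂ) ∧
            ((f u).2).val = u.val.1) ∧
        ∀ u : Zset p ε ρ,
          lowNorm p u.val.1 = ρ * ε ^ 2 ↔ lowNorm p ((f u).2).val = ρ * ε ^ 2 := by
  have h14 : (0:ℝ) < 1 + (p : ℝ) ^ 4 := by positivity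
  have hgap : ∀ x : ℝ, x ≤ ρ * ε ^ 2 → 0 < ε ^ 2 - x := by
    intro x hx
    nlinarith [pow_pos hε 2]
  have habs : ∀ u : Zset p ε ρ,
      ‖u.val.2‖ ^ 2 = (ε ^ 2 - lowNorm p u.val.1) / (1 + (p : ℝ) ^ 4) := by
    intro u
    have h := u.prop.1
    field_simp
    linarith
  have hpos : ∀ u : Zset p ε ρ, 0 < ‖u.val.2‖ := by
    intro u
    have h1 := habs u
    have h2 : 0 < ‖u.val.2‖ ^ 2 := by
      rw [h1]; exact div_pos (hgap _ u.prop.2) h14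
    nlinarith [norm_nonneg u.val.2]
  have hne : ∀ u : Zset p ε ρ, (‖u.val.2‖ : ℂ) ≠ 0 := by
    intro u
    exact_mod_cast (hpos u).ne'
  have hradsq : ∀ v : ℝ × (Fin (p-1) → ℂ), lowNorm p v ≤ ρ * ε ^ 2 →
      s13rad p ε v ^ 2 = (ε ^ 2 - lowNorm p v) / (1 + (p : ℝ) ^ 4) := by
    intro v hv
    exact Real.sq_sqrt (le_of_lt (div_pos (hgap _ hv) h14))
  have hradpos : ∀ v : ℝ × (Fin (p-1) → ℂ), lowNorm p v ≤ ρ * ε ^ 2 →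
      0 < s13rad p ε v := by
    intro v hv
    exact Real.sqrt_pos.2 (div_pos (hgap _ hv) h14)
  have habsmul : ∀ (c : Circle) (v : ℝ × (Fin (p-1) → ℂ)),
      ‖(s13rad p ε v : ℂ) * (c : ℂ)‖ = s13rad p ε v := by
    intro c v
    rw [norm_mul, Complex.norm_real, Real.norm_eq_abs, Circle.norm_coe, mul_one]
    exact abs_of_nonneg (Real.sqrt_nonneg _)
  refine ⟨⟨⟨fun u => (⟨u.val.2 / (‖u.val.2‖ : ℂ), by
        show _ ∈ Metric.sphere (0:ℂ) 1
        rw [mem_sphere_zero_iff_norm, norm_div, Complex.norm_real, Real.norm_eq_abs,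
          abs_of_nonneg (norm_nonneg _), div_self (hpos u).ne']⟩,
      ⟨u.val.1, u.prop.2⟩),
    fun x => ⟨(x.2.val, (s13rad p ε x.2.val : ℂ) * (x.1 : ℂ)), by
        constructor
        · have := hradsq x.2.val x.2.prop
          rw [habsmul, this]
          field_simp
          ring
        · exact x.2.prop⟩,
    ?_, ?_⟩, ?_, ?_⟩, ?_, ?_⟩
  · -- left_inv
    intro u
    apply Subtype.ext
    refine Prod.ext rfl ?_
    have hr : s13rad p ε u.val.1 = ‖u.val.2‖ := by
      have := habs u
      rw [s13rad, ← this, Real.sqrt_sq (norm_nonneg _)]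
    simp only [hr]
    rw [mul_div_cancel₀ _ (hne u)]
  · -- right_inv
    intro x
    have hr := hradpos x.2.val x.2.prop
    refine Prod.ext ?_ (Subtype.ext rfl)
    apply Subtype.ext
    show ((s13rad p ε x.2.val : ℂ) * (x.1 : ℂ)) / (‖(s13rad p ε x.2.val : ℂ) * (x.1 : ℂ)‖ : ℂ) = (x.1 : ℂ)
    rw [habsmul]
    rw [mul_comm, mul_div_assoc, div_self (by exact_mod_cast hr.ne'), mul_one]
  · -- continuous toFun
    refine Continuous.prodMk (Continuous.subtype_mk ?_ _) (Continuous.subtype_mk ?_ _)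
    · have h2 : Continuous fun u : Zset p ε ρ => u.val.2 :=
        continuous_snd.comp continuous_subtype_val
      exact h2.div (Complex.continuous_ofReal.comp (continuous_norm.comp h2))
        fun u => hne u
    · exact continuous_fst.comp continuous_subtype_val
  · -- continuous invFun
    refine Continuous.subtype_mk ?_ _
    have h2 : Continuous fun x : Circle × BallSet p ε ρ => x.2.val :=
      continuous_subtype_val.comp continuous_snd
    refine Continuous.prodMk h2 ?_
    exact (Complex.continuous_ofReal.comp ((s13_cont_rad p ε).comp h2)).mul
      (continuous_subtype_val.comp continuous_fst)
  · intro u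
    exact ⟨rfl, rfl⟩
  · intro u
    exact Iff.rfl
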